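/- arXiv:2405.03661 — 3 statements merged into one kernel-verified Lean document; each statement's English description precedes it below -/
import Mathlib

section
/- Let D be a probability distribution over pairs (I, S), h : I → [k] a partition, C = (C^(1),...,C^(k)) arbitrary centers in a metric space, and for each i let C_h^(i) be any point minimizing E[d(S, C) | h(I) = i]. Define φ(i) to be the index j minimizing d(C^(j), C_h^(i)). Then the expected loss E[d(S, C^(φ(h(I))))] is at most 2·E[d(S, C_h^(h(I)))] + E[min_j d(S, C^(j))]. -/
open Finset MeasureTheory ProbabilityTheory

/-- Rotation lemma: the expected loss of the rotated partition `φ ∘ h` with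
    centers `C` is at most `2 · cost(h, D) + cost(C, D)`. -/
theorem stmt2 {Ω ι S : Type*} [MeasurableSpace Ω] [MetricSpace S]
    (μ : Measure Ω) [IsProbabilityMeasure μ]
    (Inst : Ω → ι) (Sol : Ω → S) {k : ℕ} (hk : 0 < k)
    (h : ι → Fin k) (C Ch : Fin k → S)
    (hCh : ∀ i : Fin k, ∀ c : S,
      ∫ ω, dist (Sol ω) (Ch i) ∂(μ[|{ω | h (Inst ω) = i}]) ≤
        ∫ ω, dist (Sol ω) c ∂(μ[|{ω | h (Inst ω) = i}]))
    (φ : Fin k → Fin k)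
    (hφ : ∀ i j : Fin k, dist (C (φ i)) (Ch i) ≤ dist (C j) (Ch i))
    (hint1 : Integrable (fun ω => dist (Sol ω) (C (φ (h (Inst ω))))) μ)
    (hint2 : Integrable (fun ω => dist (Sol ω) (Ch (h (Inst ω)))) μ)
    (hint3 : Integrable
      (fun ω => univ.inf' (univ_nonempty_iff.mpr ⟨⟨0, hk⟩⟩) fun j => dist (Sol ω) (C j)) μ) :
    ∫ ω, dist (Sol ω) (C (φ (h (Inst ω)))) ∂μ ≤
      2 * ∫ ω, dist (Sol ω) (Ch (h (Inst ω))) ∂μ +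
        ∫ ω, univ.inf' (univ_nonempty_iff.mpr ⟨⟨0, hk⟩⟩) (fun j => dist (Sol ω) (C j)) ∂μ := by
  have hpt : ∀ ω, dist (Sol ω) (C (φ (h (Inst ω)))) ≤
      2 * dist (Sol ω) (Ch (h (Inst ω))) +
        univ.inf' (univ_nonempty_iff.mpr ⟨⟨0, hk⟩⟩) (fun j => dist (Sol ω) (C j)) := by
    intro ω
    set i := h (Inst ω)
    obtain ⟨j, -, hj⟩ := exists_mem_eq_inf' (univ_nonempty_iff.mpr ⟨⟨0, hk⟩⟩)
      (fun j => dist (Sol ω) (C j))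
    rw [hj]
    calc dist (Sol ω) (C (φ i)) ≤ dist (Sol ω) (Ch i) + dist (Ch i) (C (φ i)) :=
          dist_triangle _ _ _
      _ ≤ dist (Sol ω) (Ch i) + dist (Ch i) (C j) := by
          have := hφ i j
          rw [dist_comm (C (φ i)), dist_comm (C j)] at this
          linarith
      _ ≤ dist (Sol ω) (Ch i) + (dist (Ch i) (Sol ω) + dist (Sol ω) (C j)) := by
          linarith [dist_triangle (Ch i) (Sol ω) (C j)]
      _ = 2 * dist (Sol ω) (Ch i) + dist (Sol ω) (C j) := by
          rw [dist_comm (Ch i) (Sol ω)]; ring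
  calc ∫ ω, dist (Sol ω) (C (φ (h (Inst ω)))) ∂μ
      ≤ ∫ ω, (2 * dist (Sol ω) (Ch (h (Inst ω))) +
          univ.inf' (univ_nonempty_iff.mpr ⟨⟨0, hk⟩⟩) (fun j => dist (Sol ω) (C j))) ∂μ :=
        integral_mono hint1 ((hint2.const_mul 2).add hint3) hpt
    _ = 2 * ∫ ω, dist (Sol ω) (Ch (h (Inst ω))) ∂μ +
          ∫ ω, univ.inf' (univ_nonempty_iff.mpr ⟨⟨0, hk⟩⟩) (fun j => dist (Sol ω) (C j)) ∂μ := by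
        rw [integral_add (hint2.const_mul 2) hint3, MeasureTheory.integral_const_mul]
end

section
/- For any sequence of requests S_1,...,S_T in a metric space and any collection of k trajectories serving them, the optimal offline k-server cost to serve the sequence is at most twice the cost (hit cost plus movement cost) of the trajectory collection. -/
open Finset

/-- Auxiliary server positions: at step `n+1`, the server `a ⟨n⟩` moves to `Req ⟨n⟩`. -/
def posAux {S : Type*} {T k : ℕ} (Req : Fin T → S) (o : S) (a : Fin T → Fin k) :
    ℕ → Fin k → S
  | 0 => fun _ => o
  | (n + 1) => fun s =>
      if h : n < T then
        (if a ⟨n, h⟩ = s then Req ⟨n, h⟩ else posAux Req o a n s)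
      else posAux Req o a n s

lemma posAux_eq_req {S : Type*} {T k : ℕ} (Req : Fin T → S) (o : S) (a : Fin T → Fin k) :
    ∀ (n : ℕ) (s : Fin k) (t' : Fin T), (t' : ℕ) < n → a t' = s →
      (∀ t'' : Fin T, t' < t'' → (t'' : ℕ) < n → a t'' ≠ s) →
      posAux Req o a n s = Req t' := by
  intro n
  induction n with
  | zero => intro s t' h; omega
  | succ m ih =>
    intro s t' ht' has hlast
    by_cases hm : m < T
    · by_cases hma : a ⟨m, hm⟩ = s
      · have : t' = ⟨m, hm⟩ := by
          by_contra hne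
          have hlt : t' < (⟨m, hm⟩ : Fin T) := by
            have : (t' : ℕ) ≤ m := by omega
            rcases lt_or_eq_of_le this with h1 | h1
            · exact h1
            · exact absurd (Fin.ext h1) hne
          exact hlast ⟨m, hm⟩ hlt (Nat.lt_succ_self m) hma
        simp [posAux, hm, hma, this]
      · have ht'm : (t' : ℕ) < m := by
          rcases Nat.lt_succ_iff_lt_or_eq.mp ht' with h1 | h1
          · exact h1
          · exact absurd (by rw [← has]; congr 1; exact Fin.ext h1.symm) hma
        have := ih s t' ht'm has (fun t'' h1 h2 => hlast t'' h1 (by omega))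
        simp [posAux, hm, hma, this]
    · have ht'm : (t' : ℕ) < m := by omega
      have := ih s t' ht'm has (fun t'' h1 h2 => hlast t'' h1 (by omega))
      simp [posAux, hm, this]

lemma posAux_eq_o {S : Type*} {T k : ℕ} (Req : Fin T → S) (o : S) (a : Fin T → Fin k) :
    ∀ (n : ℕ) (s : Fin k), (∀ t' : Fin T, (t' : ℕ) < n → a t' ≠ s) →
      posAux Req o a n s = o := by
  intro n
  induction n with
  | zero => intro s _; rfl
  | succ m ih =>
    intro s hnone
    by_cases hm : m < T
    · have hma : a ⟨m, hm⟩ ≠ s := hnone ⟨m, hm⟩ (Nat.lt_succ_self m)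
      have := ih s (fun t' h => hnone t' (by omega))
      simp [posAux, hm, hma, this]
    · have := ih s (fun t' h => hnone t' (by omega))
      simp [posAux, hm, this]

/-- For any collection of `k` trajectories serving requests `Req`, there is an
    offline `k`-server solution with movement cost at most twice the trajectory
    cost (hit cost plus movement cost); hence `serveropt_k ≤ 2 · cost(trajectories)`. -/
theorem stmt4 {S : Type*} [MetricSpace S] {T k : ℕ} (hk : 0 < k)
    (Req : Fin T → S) (o : S)
    (a : Fin T → Fin k) (P : Fin T → S)
    (prev : Fin T → Option (Fin T))
    (hprev_some : ∀ t t', prev t = some t' →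
      t' < t ∧ a t' = a t ∧ ∀ t'', t' < t'' → t'' < t → a t'' ≠ a t)
    (hprev_none : ∀ t, prev t = none → ∀ t' : Fin T, t' < t → a t' ≠ a t) :
    ∃ pos : ℕ → Fin k → S,
      (pos 0 = fun _ => o) ∧
      (∀ t : Fin T, ∃ s : Fin k, pos ((t : ℕ) + 1) s = Req t) ∧
      (∑ n ∈ Finset.range T, ∑ s : Fin k, dist (pos n s) (pos (n + 1) s)) ≤
        2 * ((∑ t : Fin T, dist (P t) (Req t)) +
              ∑ t : Fin T, dist ((prev t).elim o P) (P t)) := by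
  set pos := posAux Req o a with hpos
  refine ⟨pos, rfl, ?_, ?_⟩
  · intro t
    refine ⟨a t, ?_⟩
    have ht : (t : ℕ) < T := t.isLt
    simp [hpos, posAux, ht, Fin.eta]
  · -- position of server `a t` at time `t` is the previous request on its trajectory
    have hpos_prev : ∀ t : Fin T, pos (t : ℕ) (a t) = (prev t).elim o Req := by
      intro t
      rcases h : prev t with _ | t'
      · have := hprev_none t h
        exact posAux_eq_o Req o a (t : ℕ) (a t)
          (fun t' ht' => this t' (by exact ht'))
      · obtain ⟨hlt, heq, hlast⟩ := hprev_some t t' h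
        exact posAux_eq_req Req o a (t : ℕ) (a t) t' hlt heq
          (fun t'' h1 h2 => hlast t'' h1 h2)
    -- movement cost of step n is dist from previous request to current request
    have hstep : ∀ n ∈ Finset.range T,
        (∑ s : Fin k, dist (pos n s) (pos (n + 1) s)) =
        (if h : n < T then dist ((prev ⟨n, h⟩).elim o Req) (Req ⟨n, h⟩) else 0) := by
      intro n hn
      rw [Finset.mem_range] at hn
      rw [dif_pos hn]
      set t : Fin T := ⟨n, hn⟩ with ht
      rw [Finset.sum_eq_single (a t)]
      · have h1 : pos (n + 1) (a t) = Req t := by simp [hpos, posAux, hn, ht]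
        have h2 : pos n (a t) = (prev t).elim o Req := hpos_prev t
        rw [h1, h2]
      · intro s _ hs
        have hne : a ⟨n, hn⟩ ≠ s := fun h => hs (ht ▸ h.symm)
        have : pos (n + 1) s = pos n s := by
          simp [hpos, posAux, hn, hne]
        rw [this, dist_self]
      · intro h; exact absurd (Finset.mem_univ _) h
    rw [Finset.sum_congr rfl hstep]
    rw [← Fin.sum_univ_eq_sum_range
      (fun n => if h : n < T then dist ((prev ⟨n, h⟩).elim o Req) (Req ⟨n, h⟩) else 0)]
    have hsimp : ∀ t : Fin T,
        (if h : (t : ℕ) < T then dist ((prev ⟨t, h⟩).elim o Req) (Req ⟨t, h⟩) else 0) =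
        dist ((prev t).elim o Req) (Req t) := by
      intro t; rw [dif_pos t.isLt]
    rw [Finset.sum_congr rfl (fun t _ => hsimp t)]
    -- triangle inequality per term
    have htri : ∀ t : Fin T,
        dist ((prev t).elim o Req) (Req t) ≤
          dist ((prev t).elim o P) (P t) + dist (P t) (Req t) +
          (prev t).elim 0 (fun t' => dist (P t') (Req t')) := by
      intro t
      rcases h : prev t with _ | t'
      · simp only [Option.elim]
        have := dist_triangle o (P t) (Req t)
        linarith
      · simp only [Option.elim]
        have h1 := dist_triangle (Req t') (P t') (Req t)
        have h2 := dist_triangle (P t') (P t) (Req t)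
        have h3 : dist (Req t') (P t') = dist (P t') (Req t') := dist_comm _ _
        linarith
    have hsum1 : (∑ t : Fin T, dist ((prev t).elim o Req) (Req t)) ≤
        (∑ t : Fin T, dist ((prev t).elim o P) (P t)) +
        (∑ t : Fin T, dist (P t) (Req t)) +
        (∑ t : Fin T, (prev t).elim 0 (fun t' => dist (P t') (Req t'))) := by
      rw [← Finset.sum_add_distrib, ← Finset.sum_add_distrib]
      exact Finset.sum_le_sum (fun t _ => htri t)
    -- the extra sum is bounded by the hit cost, by injectivity of prev
    have hextra : (∑ t : Fin T, (prev t).elim 0 (fun t' => dist (P t') (Req t'))) ≤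
        ∑ t : Fin T, dist (P t) (Req t) := by
      classical
      set A : Finset (Fin T) := Finset.univ.filter (fun t => (prev t).isSome) with hA
      have hzero : ∀ t ∈ Finset.univ \ A,
          (prev t).elim 0 (fun t' => dist (P t') (Req t')) = 0 := by
        intro t ht
        rw [Finset.mem_sdiff, hA, Finset.mem_filter] at ht
        rcases h : prev t with _ | t'
        · rfl
        · exact absurd ⟨Finset.mem_univ _, by rw [h]; rfl⟩ ht.2
      have hsplit : (∑ t : Fin T, (prev t).elim 0 (fun t' => dist (P t') (Req t'))) =
          ∑ t ∈ A, (prev t).elim 0 (fun t' => dist (P t') (Req t')) := by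
        rw [← Finset.sum_subset (Finset.subset_univ A)]
        intro t ht hnt
        exact hzero t (Finset.mem_sdiff.mpr ⟨ht, hnt⟩)
      rw [hsplit]
      set p : Fin T → Fin T := fun t => (prev t).getD t with hp
      have hval : ∀ t ∈ A, (prev t).elim 0 (fun t' => dist (P t') (Req t')) =
          dist (P (p t)) (Req (p t)) := by
        intro t ht
        rw [hA, Finset.mem_filter] at ht
        rcases h : prev t with _ | t'
        · rw [h] at ht; simp at ht
        · simp [hp, h]
      have hinj : Set.InjOn p A := by
        intro t1 ht1 t2 ht2 heq
        rw [Finset.coe_filter] at ht1 ht2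
        obtain ⟨_, hs1⟩ := ht1
        obtain ⟨_, hs2⟩ := ht2
        rcases Option.isSome_iff_exists.mp hs1 with ⟨u1, hu1⟩
        rcases Option.isSome_iff_exists.mp hs2 with ⟨u2, hu2⟩
        have hp1 : p t1 = u1 := by simp [hp, hu1]
        have hp2 : p t2 = u2 := by simp [hp, hu2]
        have huu : u1 = u2 := by rw [← hp1, ← hp2, heq]
        subst huu
        by_contra hne
        rcases lt_or_gt_of_ne hne with hlt | hlt
        · obtain ⟨h1, h2, _⟩ := hprev_some t1 u1 hu1
          obtain ⟨h1', h2', hlast'⟩ := hprev_some t2 u1 hu2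
          exact hlast' t1 h1 hlt (h2.symm ▸ h2')
        · obtain ⟨h1, h2, hlast⟩ := hprev_some t1 u1 hu1
          obtain ⟨h1', h2', _⟩ := hprev_some t2 u1 hu2
          exact hlast t2 h1' hlt (h2'.symm ▸ h2)
      calc (∑ t ∈ A, (prev t).elim 0 (fun t' => dist (P t') (Req t')))
          = ∑ t ∈ A, dist (P (p t)) (Req (p t)) := Finset.sum_congr rfl hval
        _ = ∑ t' ∈ A.image p, dist (P t') (Req t') :=
            (Finset.sum_image (f := fun t' => dist (P t') (Req t')) (fun x hx y hy h => hinj hx hy h)).symm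
        _ ≤ ∑ t : Fin T, dist (P t) (Req t) :=
            Finset.sum_le_sum_of_subset_of_nonneg (Finset.subset_univ _)
              (fun _ _ _ => dist_nonneg)
    have hmove_nonneg : (0:ℝ) ≤ ∑ t : Fin T, dist ((prev t).elim o P) (P t) :=
      Finset.sum_nonneg (fun _ _ => dist_nonneg)
    linarith
end

section
/- Subsuming identity: if the relation 'thread i subsumes thread j' is maintained by the rule that i kills j only when d(S_i, S_j) ≤ radius(i) − radius(j), subsumption is transitively propagated, and subsumed threads' radii grow at the same rate as their subsumers, then at all times, whenever i subsumes j, d(S_i, S_j) ≤ radius(i) − radius(j). -/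
/-- Subsuming identity: under the kill/propagation/rate rules of the quadratic
    decay algorithm, whenever thread `i` subsumes thread `j` we have
    `d(S_i, S_j) ≤ radius(i) − radius(j)`. -/
theorem stmt7 {S ι : Type*} [MetricSpace S] (Spt : ι → S)
    (R : ℕ → ι → ι → Prop) (radius : ℕ → ι → ℝ)
    (h0 : ∀ i j, ¬ R 0 i j)
    (hmono : ∀ n i j, R n i j → R (n + 1) i j)
    (hrate : ∀ n i j, R n i j →
      radius (n + 1) i - radius (n + 1) j = radius n i - radius n j)
    (hnew : ∀ n i j, R (n + 1) i j → ¬ R n i j →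
      dist (Spt i) (Spt j) ≤ radius (n + 1) i - radius (n + 1) j ∨
      ∃ m, dist (Spt i) (Spt m) ≤ radius (n + 1) i - radius (n + 1) m ∧ R n m j) :
    ∀ n i j, R n i j → dist (Spt i) (Spt j) ≤ radius n i - radius n j := by
  intro n
  induction n with
  | zero => intro i j h; exact absurd h (h0 i j)
  | succ n ih =>
    intro i j h
    by_cases hp : R n i j
    · rw [hrate n i j hp]; exact ih i j hp
    · rcases hnew n i j h hp with h1 | ⟨m, hm, hmj⟩
      · exact h1
      · calc dist (Spt i) (Spt j) ≤ dist (Spt i) (Spt m) + dist (Spt m) (Spt j) :=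
              dist_triangle _ _ _
          _ ≤ (radius (n+1) i - radius (n+1) m) + (radius (n+1) m - radius (n+1) j) := by
              have := ih m j hmj
              rw [hrate n m j hmj]; linarith
          _ = radius (n+1) i - radius (n+1) j := by ring
end
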